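/- Let A be an m×n real matrix, b ∈ ℝᵐ, and 1 ≤ k < n. Suppose there exist real scalars η_{ij} for 1 ≤ i ≤ k and k+1 ≤ j ≤ n such that every column of A beyond the k-th is a tropical linear combination of the first k columns: A_{rj} = max_{1≤i≤k} ( A_{ri} + η_{ij} ) for all rows r ∈ {1,…,m} and all j ∈ {k+1,…,n}. Let B be the m×k matrix consisting of the first k columns of A. Then the system A ⊙ X = b has a solution X ∈ ℝⁿ if and only if the reduced system B ⊙ Y = b has a solution Y ∈ ℝᵏ. -/

import Mathlib

open Matrix

/-- column analysis: Let `A` be an `m × n` real matrix, `b ∈ ℝ^m`, and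
`1 ≤ k < n`. Suppose there are scalars `η i j` (for `i` among the first `k` column indices
and `j` among the remaining ones) such that every column of `A` beyond the `k`-th is a
tropical linear combination of the first `k` columns:
`A r j = max_{i < k} (A r i + η i j)` for all rows `r` and all columns `j` with `k ≤ j`.
Let `B` be the `m × k` matrix of the first `k` columns of `A` (here `B i j = A i (castLE j)`).
Then the max-plus system `A ⊙ X = b` has a solution `X ∈ ℝ^n` iff the reduced system
`B ⊙ Y = b` has a solution `Y ∈ ℝ^k`. -/
theorem stmt10 {m n k : ℕ} (hk : 1 ≤ k) (hkn : k < n)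
    (A : Matrix (Fin m) (Fin n) ℝ) (b : Fin m → ℝ)
    (η : Fin k → Fin n → ℝ)
    (hη : ∀ (r : Fin m) (j : Fin n), k ≤ (j : ℕ) →
      A r j = Finset.univ.sup' ⟨⟨0, hk⟩, Finset.mem_univ _⟩
        (fun i : Fin k => A r (Fin.castLE hkn.le i) + η i j)) :
    (∃ X : Fin n → ℝ, ∀ i,
        Finset.univ.sup' ⟨⟨0, by omega⟩, Finset.mem_univ _⟩
          (fun j : Fin n => A i j + X j) = b i) ↔
    (∃ Y : Fin k → ℝ, ∀ i,
        Finset.univ.sup' ⟨⟨0, hk⟩, Finset.mem_univ _⟩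
          (fun j : Fin k => A i (Fin.castLE hkn.le j) + Y j) = b i) := by
  have hKne : (Finset.univ : Finset (Fin k)).Nonempty := ⟨⟨0, hk⟩, Finset.mem_univ _⟩
  set S : Finset (Fin n) := Finset.univ.filter (fun j : Fin n => k ≤ (j : ℕ)) with hS
  have hSne : S.Nonempty := ⟨⟨k, hkn⟩, by simp [hS]⟩
  constructor
  · rintro ⟨X, hX⟩
    refine ⟨fun i => max (X (Fin.castLE hkn.le i)) (S.sup' hSne (fun j => η i j + X j)), ?_⟩
    intro r
    apply le_antisymm
    · apply Finset.sup'_le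
      intro i _
      rw [add_max]
      apply max_le
      · rw [← hX r]
        exact Finset.le_sup' (fun j : Fin n => A r j + X j) (Finset.mem_univ _)
      · obtain ⟨j, hjS, hje⟩ := Finset.exists_mem_eq_sup' hSne (fun j => η i j + X j)
        rw [hje, ← add_assoc]
        have hjk : k ≤ (j : ℕ) := by simpa [hS] using hjS
        have h1 : A r (Fin.castLE hkn.le i) + η i j ≤ A r j := by
          rw [hη r j hjk]
          exact Finset.le_sup' (fun i : Fin k => A r (Fin.castLE hkn.le i) + η i j)
            (Finset.mem_univ _)
        calc A r (Fin.castLE hkn.le i) + η i j + X j ≤ A r j + X j := by linarith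
          _ ≤ b r := by
            rw [← hX r]
            exact Finset.le_sup' (fun j : Fin n => A r j + X j) (Finset.mem_univ _)
    · rw [← hX r]
      apply Finset.sup'_le
      intro j _
      by_cases hj : (j : ℕ) < k
      · have : A r j + X j ≤ A r (Fin.castLE hkn.le ⟨j, hj⟩) +
            max (X (Fin.castLE hkn.le ⟨j, hj⟩)) (S.sup' hSne (fun t => η ⟨j, hj⟩ t + X t)) := by
          have hcj : Fin.castLE hkn.le (⟨(j : ℕ), hj⟩ : Fin k) = j := by
            apply Fin.ext; rfl
          rw [hcj]
          exact add_le_add le_rfl (le_max_left _ _)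
        exact le_trans this (Finset.le_sup'
          (fun i : Fin k => A r (Fin.castLE hkn.le i) +
            max (X (Fin.castLE hkn.le i)) (S.sup' hSne (fun t => η i t + X t)))
          (Finset.mem_univ _))
      · push_neg at hj
        obtain ⟨i, _, hie⟩ := Finset.exists_mem_eq_sup'
          (⟨⟨0, hk⟩, Finset.mem_univ _⟩ : (Finset.univ : Finset (Fin k)).Nonempty)
          (fun i : Fin k => A r (Fin.castLE hkn.le i) + η i j)
        have hmem : j ∈ S := by simp [hS, hj]
        have h2 : η i j + X j ≤ S.sup' hSne (fun t => η i t + X t) :=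
          Finset.le_sup' (fun t => η i t + X t) hmem
        have : A r j + X j ≤ A r (Fin.castLE hkn.le i) +
            max (X (Fin.castLE hkn.le i)) (S.sup' hSne (fun t => η i t + X t)) := by
          rw [hη r j hj, hie]
          have := le_max_right (X (Fin.castLE hkn.le i)) (S.sup' hSne (fun t => η i t + X t))
          linarith
        exact le_trans this (Finset.le_sup'
          (fun i : Fin k => A r (Fin.castLE hkn.le i) +
            max (X (Fin.castLE hkn.le i)) (S.sup' hSne (fun t => η i t + X t)))
          (Finset.mem_univ _))
  · rintro ⟨Y, hY⟩
    refine ⟨fun j => if h : (j : ℕ) < k then Y ⟨j, h⟩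
      else Finset.univ.inf' hKne (fun i : Fin k => Y i - η i j), ?_⟩
    intro r
    apply le_antisymm
    · apply Finset.sup'_le
      intro j _
      by_cases hj : (j : ℕ) < k
      · simp only [hj, dif_pos]
        rw [← hY r]
        have hcj : Fin.castLE hkn.le (⟨(j : ℕ), hj⟩ : Fin k) = j := by apply Fin.ext; rfl
        have := Finset.le_sup' (fun i : Fin k => A r (Fin.castLE hkn.le i) + Y i)
          (Finset.mem_univ (⟨(j : ℕ), hj⟩ : Fin k))
        rw [hcj] at this
        exact this
      · push_neg at hj
        simp only [dif_neg (Nat.not_lt_of_le hj)]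
        obtain ⟨i, _, hie⟩ := Finset.exists_mem_eq_sup'
          (⟨⟨0, hk⟩, Finset.mem_univ _⟩ : (Finset.univ : Finset (Fin k)).Nonempty)
          (fun i : Fin k => A r (Fin.castLE hkn.le i) + η i j)
        have hinf : Finset.univ.inf' hKne (fun i : Fin k => Y i - η i j) ≤ Y i - η i j :=
          Finset.inf'_le _ (Finset.mem_univ _)
        have : A r j + Finset.univ.inf' hKne (fun i : Fin k => Y i - η i j) ≤
            A r (Fin.castLE hkn.le i) + Y i := by
          rw [hη r j hj, hie]; linarith
        refine le_trans this ?_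
        rw [← hY r]
        exact Finset.le_sup' (fun i : Fin k => A r (Fin.castLE hkn.le i) + Y i)
          (Finset.mem_univ _)
    · rw [← hY r]
      apply Finset.sup'_le
      intro i _
      have hlt : ((Fin.castLE hkn.le i : Fin n) : ℕ) < k := i.isLt
      have hx : (fun j : Fin n => if h : (j : ℕ) < k then Y ⟨j, h⟩
          else Finset.univ.inf' hKne (fun i : Fin k => Y i - η i j)) (Fin.castLE hkn.le i)
          = Y i := by
        simp only [dif_pos hlt]
        rfl
      have := Finset.le_sup'
        (fun j : Fin n => A r j + (if h : (j : ℕ) < k then Y ⟨j, h⟩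
          else Finset.univ.inf' hKne (fun i : Fin k => Y i - η i j)))
        (Finset.mem_univ (Fin.castLE hkn.le i))
      simpa [hx] using this
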